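/- There exists a finite bounded poset that is not graded, is CC-shellable, and is not CL-shellable. -/

import Mathlib

open scoped Classical

variable {P : Type*} [PartialOrder P] [BoundedOrder P]

/-- `CoverList l` : consecutive entries of `l` are cover relations. -/
def CoverList : List P → Prop
  | x :: y :: t => x ⋖ y ∧ CoverList (y :: t)
  | _ => True

/-- `SatFromTo l x y` : `l` is a saturated chain (i.e. a maximal chain of the interval
`[x,y]`) starting at `x` and ending at `y`. -/
def SatFromTo (l : List P) (x y : P) : Prop :=
  l ≠ [] ∧ l.head? = some x ∧ l.getLast? = some y ∧ CoverList l

/-- `m` is a maximal chain of the bounded poset `P`. -/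
def MaxChainOfP (m : List P) : Prop := SatFromTo m ⊥ ⊤

/-- `r` is a root of `x`, i.e. a maximal chain of `[⊥, x]` (it contains `x`). -/
def RootOf (r : List P) (x : P) : Prop := SatFromTo r ⊥ x

/-- The label sequence of a chain (the second argument, which starts at the last
element of the root `r`) with respect to a chain-edge labeling `lab`. -/
def labelSeq {Λ : Type*} (lab : List P → P → P → Λ) : List P → List P → List Λ
  | r, x :: y :: t => lab r x y :: labelSeq lab (r ++ [y]) (y :: t)
  | _, _ => []

/-- The pair of rooted cover relations `[u,v]_r`, `[v,w]_{r∪{v}}` is a topological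
ascent: its label sequence lexicographically strictly precedes the label sequence of
every other maximal chain of `[u,w]_r`. -/
def TopAscent (lab : List P → P → P → ℤ) (r : List P) (u v w : P) : Prop :=
  ∀ c : List P, SatFromTo c u w → c ≠ [u, v, w] →
    List.Lex (· < ·) (labelSeq lab r [u, v, w]) (labelSeq lab r c)

/-- The chain (second argument) with root `r` is topologically ascending. -/
def TopAscending (lab : List P → P → P → ℤ) : List P → List P → Prop
  | r, u :: v :: w :: t => TopAscent lab r u v w ∧ TopAscending lab (r ++ [v]) (v :: w :: t)
  | _, _ => True

/-- TCL-labeling : every rooted interval has a unique topologically ascending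
maximal chain. -/
def IsTCLLabeling (lab : List P → P → P → ℤ) : Prop :=
  ∀ x y : P, x ≤ y → ∀ r : List P, RootOf r x →
    ∃! c : List P, SatFromTo c x y ∧ TopAscending lab r c

/-- CC-labeling : a TCL-labeling such that in every rooted interval distinct maximal
chains get distinct label sequences, none of which is a prefix of another. -/
def IsCCLabeling (lab : List P → P → P → ℤ) : Prop :=
  IsTCLLabeling lab ∧
    ∀ x y : P, x ≤ y → ∀ r : List P, RootOf r x →
      ∀ c c' : List P, SatFromTo c x y → SatFromTo c' x y → c ≠ c' →
        ¬ labelSeq lab r c <+: labelSeq lab r c'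

/-- CL-labeling with labels in an arbitrary poset `Λ`. -/
def IsCLLabeling {Λ : Type*} [PartialOrder Λ] (lab : List P → P → P → Λ) : Prop :=
  ∀ x y : P, x ≤ y → ∀ r : List P, RootOf r x →
    ∃ c : List P, (SatFromTo c x y ∧ List.Chain' (· < ·) (labelSeq lab r c)) ∧
      (∀ c' : List P, SatFromTo c' x y → List.Chain' (· < ·) (labelSeq lab r c') → c' = c) ∧
      (∀ c' : List P, SatFromTo c' x y → c' ≠ c →
        List.Lex (· < ·) (labelSeq lab r c) (labelSeq lab r c'))

def TCLShellable (P : Type*) [PartialOrder P] [BoundedOrder P] : Prop :=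
  ∃ lab : List P → P → P → ℤ, IsTCLLabeling lab

def CCShellable (P : Type*) [PartialOrder P] [BoundedOrder P] : Prop :=
  ∃ lab : List P → P → P → ℤ, IsCCLabeling lab

def CLShellable (P : Type*) [PartialOrder P] [BoundedOrder P] : Prop :=
  ∃ (Λ : Type) (_ : PartialOrder Λ) (lab : List P → P → P → Λ), IsCLLabeling lab

/-- `P` is graded : all maximal chains of `P` have the same length. -/
def Graded (P : Type*) [PartialOrder P] [BoundedOrder P] : Prop :=
  ∀ c c' : List P, MaxChainOfP c → MaxChainOfP c' → c.length = c'.length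

/-- `Γ` is a total order `m₁, …, m_t` on the maximal chains of `P`. -/
def Enumerates (Γ : List (List P)) : Prop :=
  Γ.Nodup ∧ ∀ m : List P, m ∈ Γ ↔ MaxChainOfP m

/-- `Γ` is a total order on the maximal chains which agrees with (is consistent with)
the lexicographic order on maximal chains induced by `lab`. -/
def AgreesWithLex (lab : List P → P → P → ℤ) (Γ : List (List P)) : Prop :=
  Enumerates Γ ∧ ∀ i j : ℕ, i < j → j < Γ.length →
    ¬ List.Lex (· < ·) (labelSeq lab [(⊥ : P)] (Γ.getD j []))
        (labelSeq lab [(⊥ : P)] (Γ.getD i []))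

/-- Position in `Γ` of the earliest maximal chain containing all elements of `l`. -/
noncomputable def fidx (Γ : List (List P)) (l : List P) : ℕ :=
  Γ.findIdx fun m => decide (∀ a ∈ l, a ∈ m)

/-- `a'` witnesses that the earliest chain containing `r ∪ {a}` is "sandwiched" by
two chains containing `r ∪ {a'}`. -/
def Sandwiched (Γ : List (List P)) (r : List P) (x a a' : P) : Prop :=
  x ⋖ a' ∧ fidx Γ (r ++ [a']) < fidx Γ (r ++ [a]) ∧
    ∃ l : ℕ, fidx Γ (r ++ [a]) < l ∧ l < Γ.length ∧ ∀ w ∈ r ++ [a'], w ∈ Γ.getD l []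

/-- The label (a position in `Γ`) that the CE-labeling determined by the total order
`Γ` assigns to the rooted cover relation `[x,a]_r`. -/
noncomputable def detLabel (Γ : List (List P)) (r : List P) (x a : P) : ℕ :=
  if h : ∃ n : ℕ, ∃ a' : P, Sandwiched Γ r x a a' ∧ fidx Γ (r ++ [a']) = n then
    detLabel Γ r x (Nat.find_spec h).choose
  else fidx Γ (r ++ [a])
termination_by fidx Γ (r ++ [a])
decreasing_by exact ((Nat.find_spec h).choose_spec).1.2.1

/-- The CE-labeling of `P` determined by the total order `Γ` on maximal chains. -/
noncomputable def detLabeling (Γ : List (List P)) : List P → P → P → ℤ :=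
  fun r x a => (detLabel Γ r x a : ℤ)

/-- `Ω` is a recursive first atom set (RFAS) for `P`. -/
def IsRFAS (Ω : List P → P → P → P) : Prop :=
  (∀ c : List P, CoverList c → c.length ≤ 2) ∨
    ∀ x y : P, x < y → ∀ r : List P, RootOf r x →
      (x ⋖ Ω r x y ∧ Ω r x y ≤ y) ∧
      ∀ a : P, x ⋖ a → a < y →
        (a = Ω r x y ↔ a = Ω r x (Ω (r ++ [a]) a y)) ∧
        (a ≠ Ω r x y →
          ∃ (p : ℕ) (A B : ℕ → P), 1 ≤ p ∧
            (∀ i, 1 ≤ i → i ≤ p → x ⋖ A i ∧ A i ≤ y) ∧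
            A p = Ω r x (Ω (r ++ [a]) a y) ∧ A 1 = Ω r x y ∧
            ∀ i, 1 ≤ i → i ≤ p - 1 →
              B i = Ω (r ++ [A (i + 1)]) (A (i + 1)) y ∧ A i = Ω r x (B i))

/-- The chain (second argument, a saturated chain from the last element of the root to
`y`) is the first atom chain `c(r, x, y)` of the rooted interval with top `y`:
each step except possibly the last follows the first atoms of `Ω`. -/
def IsFAC (Ω : List P → P → P → P) (y : P) : List P → List P → Prop
  | r, x :: z :: t => (t ≠ [] → z = Ω r x y) ∧ IsFAC Ω y (r ++ [z]) (z :: t)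
  | _, _ => True

/-- The chain (second argument) with root `r` contains a pseudo descent with respect
to `Ω`. -/
def HasPseudoDescent (Ω : List P → P → P → P) : List P → List P → Prop
  | r, u :: v :: w :: t => v ≠ Ω r u w ∨ HasPseudoDescent Ω (r ++ [v]) (v :: w :: t)
  | _, _ => False

/-- `m → m'` : `m` is obtained from the maximal chain `m'` by replacing a pseudo
descent `x ⋖ y ⋖ z` of `m'` with the first atom chain `c(m^x, x, z)`. -/
def StepRel (Ω : List P → P → P → P) (m m' : List P) : Prop :=
  MaxChainOfP m ∧ MaxChainOfP m' ∧
    ∃ (x y z : P) (r d c : List P),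
      RootOf r x ∧ x ⋖ y ∧ y ⋖ z ∧ y ≠ Ω r x z ∧
      m' = r ++ y :: z :: d ∧
      SatFromTo c x z ∧ IsFAC Ω z r c ∧
      m = r ++ c.tail ++ d

/-- `Γ` is a linear extension of the partial order `⪯` (the reflexive-transitive
closure of `→`) on the maximal chains of `P`. -/
def LinExtOf (Ω : List P → P → P → P) (Γ : List (List P)) : Prop :=
  Enumerates Γ ∧ ∀ i j : ℕ, i < Γ.length → j < Γ.length →
    Relation.ReflTransGen (StepRel Ω) (Γ.getD i []) (Γ.getD j []) → i ≤ j

/-- `Γ`, a total order on the facets (maximal chains) of the order complex `Δ(P)`,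
is a shelling order: for each `j` the intersection of the `j`-th facet with the union
of the earlier ones is pure of dimension one less than that of the `j`-th facet. -/
def IsShelling (Γ : List (List P)) : Prop :=
  ∀ j : ℕ, 0 < j → j < Γ.length → ∀ S : Finset P,
    S ⊆ (Γ.getD j []).toFinset → (∃ i < j, S ⊆ (Γ.getD i []).toFinset) →
    ∃ T : Finset P, S ⊆ T ∧ T ⊆ (Γ.getD j []).toFinset ∧
      (∃ i < j, T ⊆ (Γ.getD i []).toFinset) ∧
      T.card + 1 = (Γ.getD j []).toFinset.card

/-- Condition (LC) for a linear extension `Γ` of `⪯`. -/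
def LCCondition (Γ : List (List P)) : Prop :=
  ∀ i j k : ℕ, i < j → j < k → k < Γ.length →
    ∀ (r : List P) (x y y' z : P), RootOf r x → x ⋖ y → y ⋖ z → x ⋖ y' →
      (∀ w ∈ r ++ [y, z], w ∈ Γ.getD i []) →
      (∀ w ∈ r ++ [y, z], w ∈ Γ.getD k []) →
      (∀ w ∈ r ++ [y'], w ∈ Γ.getD j []) → y' = y

/-- `Ω` is a labeling-compatible recursive first atom set (LCRFAS). -/
def IsLCRFAS (Ω : List P → P → P → P) : Prop :=
  IsRFAS Ω ∧ ∃ Γ : List (List P), LinExtOf Ω Γ ∧ LCCondition Γ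

/-- The CE-labeling `lab` is compatible with the RFAS `Ω` : in every rooted interval
the first atom lies on a lexicographically smallest maximal chain. -/
def Compatible (lab : List P → P → P → ℤ) (Ω : List P → P → P → P) : Prop :=
  ∀ x y : P, x < y → ∀ r : List P, RootOf r x →
    ∃ c : List P, SatFromTo c x y ∧ Ω r x y ∈ c ∧
      ∀ c' : List P, SatFromTo c' x y →
        ¬ List.Lex (· < ·) (labelSeq lab r c') (labelSeq lab r c)

namespace CCnotCL

inductive PX | x0|x1|x2|x3|x4|x5|x6|x7|x8
deriving DecidableEq

instance : Fintype PX where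
  elems := ⟨↑[PX.x0, PX.x1, PX.x2, PX.x3, PX.x4, PX.x5, PX.x6, PX.x7, PX.x8], by decide⟩
  complete := fun x => by cases x <;> decide

def ltb : PX → PX → Bool
  | PX.x0, PX.x1 => true
  | PX.x0, PX.x2 => true
  | PX.x0, PX.x3 => true
  | PX.x0, PX.x4 => true
  | PX.x0, PX.x5 => true
  | PX.x0, PX.x6 => true
  | PX.x0, PX.x7 => true
  | PX.x0, PX.x8 => true
  | PX.x1, PX.x8 => true
  | PX.x2, PX.x8 => true
  | PX.x3, PX.x2 => true
  | PX.x3, PX.x8 => true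
  | PX.x4, PX.x1 => true
  | PX.x4, PX.x2 => true
  | PX.x4, PX.x8 => true
  | PX.x5, PX.x2 => true
  | PX.x5, PX.x3 => true
  | PX.x5, PX.x8 => true
  | PX.x6, PX.x1 => true
  | PX.x6, PX.x2 => true
  | PX.x6, PX.x3 => true
  | PX.x6, PX.x4 => true
  | PX.x6, PX.x8 => true
  | PX.x7, PX.x1 => true
  | PX.x7, PX.x2 => true
  | PX.x7, PX.x3 => true
  | PX.x7, PX.x5 => true
  | PX.x7, PX.x8 => true
  | _, _ => false

private def leb (a b : PX) : Prop := a = b ∨ ltb a b = true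

instance (a b : PX) : Decidable (leb a b) :=
  inferInstanceAs (Decidable (a = b ∨ ltb a b = true))

private lemma leb_trans : ∀ a b c : PX, leb a b → leb b c → leb a c := by decide
private lemma leb_antisymm : ∀ a b : PX, leb a b → leb b a → a = b := by decide
private lemma ltb_iff : ∀ a b : PX, ltb a b = true ↔ leb a b ∧ ¬ leb b a := by decide

instance : PartialOrder PX where
  le := leb
  lt a b := ltb a b = true
  le_refl a := Or.inl rfl
  le_trans := leb_trans
  le_antisymm := leb_antisymm
  lt_iff_le_not_ge := ltb_iff

instance : DecidableRel ((· ≤ ·) : PX → PX → Prop) :=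
  fun a b => inferInstanceAs (Decidable (a = b ∨ ltb a b = true))

instance : DecidableRel ((· < ·) : PX → PX → Prop) :=
  fun a b => inferInstanceAs (Decidable (ltb a b = true))

instance : BoundedOrder PX where
  top := PX.x8
  bot := PX.x0
  le_top a := by revert a; decide
  bot_le a := by revert a; decide

instance : DecidableRel ((· ⋖ ·) : PX → PX → Prop) :=
  fun a b => decidable_of_iff (a < b ∧ ∀ c : PX, a < c → ¬ c < b)
    ⟨fun h => ⟨h.1, fun {c} hc => h.2 c hc⟩, fun h => ⟨h.1, fun c hc => h.2 hc⟩⟩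

example : (⊥ : PX) = PX.x0 := rfl
example : PX.x0 ⋖ PX.x6 := by decide
example : ¬ PX.x0 ⋖ PX.x3 := by decide

end CCnotCL

namespace CCnotCL

section Machinery

set_option linter.unusedSectionVars false

variable {Q : Type*} [PartialOrder Q] [Fintype Q] [DecidableEq Q]
  [DecidableRel ((· < ·) : Q → Q → Prop)] [DecidableRel ((· ≤ ·) : Q → Q → Prop)]
  [DecidableRel ((· ⋖ ·) : Q → Q → Prop)]

/-- Enumeration of saturated chains from `x` to `y` with fuel `n`,
where `elems` enumerates all elements of `Q`. -/
def sats (elems : List Q) : ℕ → Q → Q → List (List Q)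
  | 0, _, _ => []
  | n+1, x, y =>
    if x = y then [[x]] else
      (elems.filter (fun a => decide (x ⋖ a) && decide (a ≤ y))).flatMap
        (fun a => (sats elems n a y).map (x :: ·))

lemma satFromTo_single {z x y : Q} : SatFromTo [z] x y ↔ z = x ∧ z = y := by
  constructor
  · rintro ⟨-, h1, h2, -⟩
    rw [List.head?_cons] at h1
    rw [List.getLast?_singleton] at h2
    exact ⟨Option.some_injective _ h1, Option.some_injective _ h2⟩
  · rintro ⟨rfl, rfl⟩
    exact ⟨by simp, rfl, rfl, trivial⟩

lemma satFromTo_cons_cons {x' x a : Q} {t : List Q} {y : Q} :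
    SatFromTo (x :: a :: t) x' y ↔ x' = x ∧ x ⋖ a ∧ SatFromTo (a :: t) a y := by
  constructor
  · rintro ⟨-, h1, h2, hc, hrest⟩
    rw [List.head?_cons] at h1
    exact ⟨(Option.some_injective _ h1).symm, hc,
      ⟨by simp, rfl, by rwa [List.getLast?_cons_cons] at h2, hrest⟩⟩
  · rintro ⟨rfl, hc, ⟨-, -, h2, hrest⟩⟩
    exact ⟨by simp, rfl, by rwa [List.getLast?_cons_cons], hc, hrest⟩

lemma satFromTo_le : ∀ {l : List Q} {x y : Q}, SatFromTo l x y → x ≤ y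
  | [], _, _, h => absurd rfl h.1
  | [z], x, y, h => by
      obtain ⟨rfl, rfl⟩ := satFromTo_single.mp h; exact le_refl _
  | w :: a :: t, x, y, h => by
      obtain ⟨he, hc, hrest⟩ := satFromTo_cons_cons.mp h
      subst he
      exact le_trans hc.lt.le (satFromTo_le hrest)

lemma satFromTo_self {c : List Q} {x : Q} : SatFromTo c x x ↔ c = [x] := by
  constructor
  · intro h
    match c, h with
    | [z], h => obtain ⟨rfl, -⟩ := satFromTo_single.mp h; rfl
    | z :: a :: t, h =>
      obtain ⟨rfl, hc, hrest⟩ := satFromTo_cons_cons.mp h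
      exact absurd (satFromTo_le hrest) (not_le_of_gt hc.lt)
  · rintro rfl; exact satFromTo_single.mpr ⟨rfl, rfl⟩

lemma coverList_chain' : ∀ {l : List Q}, CoverList l → List.Chain' (· ⋖ ·) l
  | [], _ => List.isChain_nil
  | [z], _ => List.isChain_singleton z
  | x :: a :: t, h =>
      List.isChain_cons_cons.mpr ⟨h.1, coverList_chain' h.2⟩

lemma satFromTo_length_le {c : List Q} {x y : Q} (h : SatFromTo c x y) :
    c.length ≤ Fintype.card Q := by
  have h1 : List.Chain' (· < ·) c := (coverList_chain' h.2.2.2).imp (fun _ _ hc => hc.lt)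
  have h2 : c.Pairwise (· < ·) := List.isChain_iff_pairwise.mp h1
  exact List.Nodup.length_le_card (h2.imp ne_of_lt)

theorem mem_sats (elems : List Q) (helems : ∀ a : Q, a ∈ elems) :
    ∀ (n : ℕ) (x y : Q) (c : List Q),
    c ∈ sats elems n x y ↔ (SatFromTo c x y ∧ c.length ≤ n)
  | 0, x, y, c => by
      simp only [sats, List.not_mem_nil, false_iff, not_and, not_le]
      intro h
      cases c with
      | nil => exact absurd rfl h.1
      | cons a t => simp
  | n+1, x, y, c => by
      rcases eq_or_ne x y with rfl | hxy
      · rw [sats, if_pos rfl]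
        simp only [List.mem_singleton]
        constructor
        · rintro rfl; exact ⟨satFromTo_self.mpr rfl, by simp⟩
        · rintro ⟨h, -⟩; exact satFromTo_self.mp h
      · rw [sats, if_neg hxy]
        simp only [List.mem_flatMap, List.mem_filter, List.mem_map,
          Bool.and_eq_true, decide_eq_true_eq]
        constructor
        · rintro ⟨a, ⟨-, hca, hay⟩, c', hc', rfl⟩
          obtain ⟨hsat, hlen⟩ := (mem_sats elems helems n a y c').mp hc'
          have hc'ne : c' ≠ [] := hsat.1
          match c', hc'ne, hsat, hlen with
          | a' :: t, _, hsat, hlen =>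
            have ha' : a' = a := by
              have h5 := hsat.2.1
              rw [List.head?_cons] at h5
              exact Option.some_injective _ h5
            subst ha'
            exact ⟨satFromTo_cons_cons.mpr ⟨rfl, hca, hsat⟩, by
              simpa using Nat.succ_le_succ hlen⟩
        · rintro ⟨hsat, hlen⟩
          match c, hsat, hlen with
          | [z], hsat, hlen =>
            obtain ⟨rfl, rfl⟩ := satFromTo_single.mp hsat
            exact absurd rfl hxy
          | z :: a :: t, hsat, hlen =>
            obtain ⟨rfl, hca, hrest⟩ := satFromTo_cons_cons.mp hsat
            refine ⟨a, ⟨helems a, hca, satFromTo_le hrest⟩, a :: t, ?_, rfl⟩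
            refine (mem_sats elems helems n a y (a :: t)).mpr ⟨hrest, ?_⟩
            have : (a :: t).length ≤ n := by simp at hlen ⊢; omega
            simpa using this

theorem satFromTo_iff_mem (elems : List Q) (helems : ∀ a : Q, a ∈ elems)
    (hcard : Fintype.card Q ≤ elems.length) {x y : Q} {c : List Q} :
    SatFromTo c x y ↔ c ∈ sats elems elems.length x y := by
  rw [mem_sats elems helems]
  exact ⟨fun h => ⟨h, le_trans (satFromTo_length_le h) hcard⟩, And.left⟩

end Machinery

end CCnotCL

namespace CCnotCL

section Machinery2

set_option linter.unusedSectionVars false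

variable {Q : Type*} [PartialOrder Q] [BoundedOrder Q] [Fintype Q] [DecidableEq Q]
  [DecidableRel ((· < ·) : Q → Q → Prop)] [DecidableRel ((· ≤ ·) : Q → Q → Prop)]
  [DecidableRel ((· ⋖ ·) : Q → Q → Prop)]

/-- Decidable analogue of `TopAscent`. -/
def TopAscentD (lab : List Q → Q → Q → ℤ) (elems : List Q) (n : ℕ)
    (r : List Q) (u v w : Q) : Prop :=
  ∀ c ∈ sats elems n u w, c ≠ [u, v, w] →
    List.Lex (· < ·) (labelSeq lab r [u, v, w]) (labelSeq lab r c)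

lemma topAscentD_iff (lab : List Q → Q → Q → ℤ) (elems : List Q)
    (helems : ∀ a : Q, a ∈ elems) (hcard : Fintype.card Q ≤ elems.length)
    (r : List Q) (u v w : Q) :
    TopAscent lab r u v w ↔ TopAscentD lab elems elems.length r u v w := by
  constructor
  · intro h c hc
    exact h c ((satFromTo_iff_mem elems helems hcard).mpr hc)
  · intro h c hc
    exact h c ((satFromTo_iff_mem elems helems hcard).mp hc)

/-- Decidable analogue of `TopAscending`. -/
def TopAscendingD (lab : List Q → Q → Q → ℤ) (elems : List Q) (n : ℕ) :
    List Q → List Q → Prop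
  | r, u :: v :: w :: t =>
      TopAscentD lab elems n r u v w ∧
        TopAscendingD lab elems n (r ++ [v]) (v :: w :: t)
  | _, _ => True

lemma topAscendingD_iff (lab : List Q → Q → Q → ℤ) (elems : List Q)
    (helems : ∀ a : Q, a ∈ elems) (hcard : Fintype.card Q ≤ elems.length) :
    ∀ (r l : List Q),
      TopAscending lab r l ↔ TopAscendingD lab elems elems.length r l
  | r, [] => by constructor <;> intro <;> trivial
  | r, [u] => by constructor <;> intro <;> trivial
  | r, [u, v] => by constructor <;> intro <;> trivial
  | r, u :: v :: w :: t => by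
      show TopAscent lab r u v w ∧ TopAscending lab (r ++ [v]) (v :: w :: t) ↔
        TopAscentD lab elems elems.length r u v w ∧
          TopAscendingD lab elems elems.length (r ++ [v]) (v :: w :: t)
      rw [topAscentD_iff lab elems helems hcard,
        topAscendingD_iff lab elems helems hcard (r ++ [v]) (v :: w :: t)]

def topAscentD_dec' (lab : List Q → Q → Q → ℤ) (elems : List Q) (n : ℕ)
    (r : List Q) (u v w : Q) :
    Decidable (∀ c ∈ sats elems n u w, c ≠ [u, v, w] →
      List.Lex (· < ·) (labelSeq lab r [u, v, w]) (labelSeq lab r c)) := inferInstance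

instance topAscentD_dec (lab : List Q → Q → Q → ℤ) (elems : List Q) (n : ℕ)
    (r : List Q) (u v w : Q) : Decidable (TopAscentD lab elems n r u v w) :=
  topAscentD_dec' lab elems n r u v w

instance topAscendingD_dec (lab : List Q → Q → Q → ℤ) (elems : List Q) (n : ℕ) :
    ∀ (r l : List Q), Decidable (TopAscendingD lab elems n r l)
  | r, [] => isTrue trivial
  | _, [_] => isTrue trivial
  | _, [_, _] => isTrue trivial
  | r, u :: v :: w :: t =>
      have : Decidable (TopAscendingD lab elems n (r ++ [v]) (v :: w :: t)) :=
        topAscendingD_dec lab elems n (r ++ [v]) (v :: w :: t)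
      inferInstanceAs (Decidable (_ ∧ _))

/-- Decidable analogue of `IsCCLabeling`. -/
def IsCCLabelingD (lab : List Q → Q → Q → ℤ) (elems : List Q) (n : ℕ) : Prop :=
  ∀ x y : Q, x ≤ y → ∀ r ∈ sats elems n ⊥ x,
    (∃ c ∈ sats elems n x y, TopAscendingD lab elems n r c ∧
        ∀ c' ∈ sats elems n x y, TopAscendingD lab elems n r c' → c' = c) ∧
      ∀ c ∈ sats elems n x y, ∀ c' ∈ sats elems n x y, c ≠ c' →
        ¬ labelSeq lab r c <+: labelSeq lab r c'

def isCCLabelingD_dec' (lab : List Q → Q → Q → ℤ) (elems : List Q) (n : ℕ) :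
    Decidable (∀ x y : Q, x ≤ y → ∀ r ∈ sats elems n ⊥ x,
      (∃ c ∈ sats elems n x y, TopAscendingD lab elems n r c ∧
          ∀ c' ∈ sats elems n x y, TopAscendingD lab elems n r c' → c' = c) ∧
        ∀ c ∈ sats elems n x y, ∀ c' ∈ sats elems n x y, c ≠ c' →
          ¬ labelSeq lab r c <+: labelSeq lab r c') := inferInstance

instance isCCLabelingD_dec (lab : List Q → Q → Q → ℤ) (elems : List Q) (n : ℕ) :
    Decidable (IsCCLabelingD lab elems n) := isCCLabelingD_dec' lab elems n

lemma isCCLabeling_iff (lab : List Q → Q → Q → ℤ) (elems : List Q)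
    (helems : ∀ a : Q, a ∈ elems) (hcard : Fintype.card Q ≤ elems.length) :
    IsCCLabeling lab ↔ IsCCLabelingD lab elems elems.length := by
  have hs : ∀ {c : List Q} {x y : Q},
      SatFromTo c x y ↔ c ∈ sats elems elems.length x y :=
    fun {c x y} => satFromTo_iff_mem elems helems hcard
  have ht : ∀ (r l : List Q),
      TopAscending lab r l ↔ TopAscendingD lab elems elems.length r l :=
    topAscendingD_iff lab elems helems hcard
  constructor
  · rintro ⟨h1, h2⟩ x y hxy r hr
    obtain ⟨c, ⟨hc1, hc2⟩, hc3⟩ := h1 x y hxy r (hs.mpr hr)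
    refine ⟨⟨c, hs.mp hc1, (ht r c).mp hc2, fun c' hc' hta => hc3 c' ⟨hs.mpr hc', (ht r c').mpr hta⟩⟩, ?_⟩
    intro c hc c' hc' hne
    exact h2 x y hxy r (hs.mpr hr) c c' (hs.mpr hc) (hs.mpr hc') hne
  · intro h
    constructor
    · intro x y hxy r hr
      obtain ⟨⟨c, hc1, hc2, hc3⟩, -⟩ := h x y hxy r (hs.mp hr)
      exact ⟨c, ⟨hs.mpr hc1, (ht r c).mpr hc2⟩,
        fun c' ⟨h1', h2'⟩ => hc3 c' (hs.mp h1') ((ht r c').mp h2')⟩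
    · intro x y hxy r hr c c' hc hc' hne
      exact (h x y hxy r (hs.mp hr)).2 c (hs.mp hc) c' (hs.mp hc') hne

end Machinery2

end CCnotCL

namespace CCnotCL

def elemsPX : List PX :=
  [.x0, .x1, .x2, .x3, .x4, .x5, .x6, .x7, .x8]

lemma elemsPX_mem : ∀ a : PX, a ∈ elemsPX := by decide

lemma cardPX : Fintype.card PX ≤ elemsPX.length := by decide

def mylab : List PX → PX → PX → ℤ
  | [PX.x0], PX.x0, PX.x6 => 0
  | [PX.x0], PX.x0, PX.x7 => 0
  | [PX.x0, PX.x6], PX.x6, PX.x3 => 12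
  | [PX.x0, PX.x6], PX.x6, PX.x4 => 13
  | [PX.x0, PX.x6, PX.x3], PX.x3, PX.x2 => 6
  | [PX.x0, PX.x6, PX.x3, PX.x2], PX.x2, PX.x8 => 3
  | [PX.x0, PX.x6, PX.x4], PX.x4, PX.x1 => 9
  | [PX.x0, PX.x6, PX.x4], PX.x4, PX.x2 => 8
  | [PX.x0, PX.x6, PX.x4, PX.x1], PX.x1, PX.x8 => 1
  | [PX.x0, PX.x6, PX.x4, PX.x2], PX.x2, PX.x8 => 4
  | [PX.x0, PX.x7], PX.x7, PX.x1 => 14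
  | [PX.x0, PX.x7], PX.x7, PX.x5 => 11
  | [PX.x0, PX.x7, PX.x1], PX.x1, PX.x8 => 2
  | [PX.x0, PX.x7, PX.x5], PX.x5, PX.x3 => 10
  | [PX.x0, PX.x7, PX.x5, PX.x3], PX.x3, PX.x2 => 7
  | [PX.x0, PX.x7, PX.x5, PX.x3, PX.x2], PX.x2, PX.x8 => 5
  | _, _, _ => 999

set_option maxHeartbeats 4000000 in
set_option maxRecDepth 100000 in
theorem ccPX : IsCCLabeling mylab :=
  (isCCLabeling_iff mylab elemsPX elemsPX_mem cardPX).mpr (by decide)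

end CCnotCL

namespace CCnotCL

lemma satPX {c : List PX} {x y : PX} :
    SatFromTo c x y ↔ c ∈ sats elemsPX 9 x y :=
  satFromTo_iff_mem elemsPX elemsPX_mem cardPX

lemma notGradedPX : ¬ Graded PX := by
  intro h
  have h1 : MaxChainOfP [PX.x0, PX.x7, PX.x1, PX.x8] := satPX.mpr (by decide)
  have h2 : MaxChainOfP [PX.x0, PX.x6, PX.x4, PX.x1, PX.x8] := satPX.mpr (by decide)
  have := h _ _ h1 h2
  simp at this

lemma lex_cons_inv {Λ : Type} [PartialOrder Λ] {a b : Λ} {l m : List Λ}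
    (h : List.Lex (· < ·) (a :: l) (b :: m)) :
    a < b ∨ (a = b ∧ List.Lex (· < ·) l m) := by
  cases h with
  | rel h => exact Or.inl h
  | cons h => exact Or.inr ⟨rfl, h⟩

lemma lex_nil {Λ : Type} [PartialOrder Λ] {l : List Λ} :
    ¬ List.Lex (· < ·) l ([] : List Λ) := fun h => by cases h

lemma rootPX0 : RootOf [PX.x0] PX.x0 := satPX.mpr (by decide)
lemma rootPX6 : RootOf [PX.x0, PX.x6] PX.x6 := satPX.mpr (by decide)
lemma rootPX7 : RootOf [PX.x0, PX.x7] PX.x7 := satPX.mpr (by decide)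

lemma chain'_pair {Λ : Type} [PartialOrder Λ] {a b : Λ} (h : a < b) :
    List.Chain' (· < ·) [a, b] :=
  List.isChain_cons_cons.mpr ⟨h, List.isChain_singleton b⟩

lemma chain'_triple {Λ : Type} [PartialOrder Λ] {a b c : Λ} (h1 : a < b) (h2 : b < c) :
    List.Chain' (· < ·) [a, b, c] :=
  List.isChain_cons_cons.mpr ⟨h1, chain'_pair h2⟩

theorem notCLPX : ¬ CLShellable PX := by
  rintro ⟨Λ, instΛ, lab, h⟩
  -- single-chain intervals force increasing label sequences
  -- interval [x0, x4], root [x0] : unique chain [x0,x6,x4]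
  obtain ⟨c1, ⟨hc1sat, hc1inc⟩, -, -⟩ := h PX.x0 PX.x4 (by decide) [PX.x0] rootPX0
  have e1 : c1 = [PX.x0, PX.x6, PX.x4] := by
    have := satPX.mp hc1sat
    rw [show sats elemsPX 9 PX.x0 PX.x4 = [[PX.x0, PX.x6, PX.x4]] from by decide] at this
    simpa using this
  subst e1
  have hA64 : lab [PX.x0] PX.x0 PX.x6 < lab [PX.x0, PX.x6] PX.x6 PX.x4 :=
    (List.isChain_cons_cons.mp hc1inc).1
  -- interval [x0, x5], root [x0] : unique chain [x0,x7,x5]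
  obtain ⟨c2, ⟨hc2sat, hc2inc⟩, -, -⟩ := h PX.x0 PX.x5 (by decide) [PX.x0] rootPX0
  have e2 : c2 = [PX.x0, PX.x7, PX.x5] := by
    have := satPX.mp hc2sat
    rw [show sats elemsPX 9 PX.x0 PX.x5 = [[PX.x0, PX.x7, PX.x5]] from by decide] at this
    simpa using this
  subst e2
  have hB75 : lab [PX.x0] PX.x0 PX.x7 < lab [PX.x0, PX.x7] PX.x7 PX.x5 :=
    (List.isChain_cons_cons.mp hc2inc).1
  -- interval [x6, x1], root [x0,x6] : unique chain [x6,x4,x1]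
  obtain ⟨c3, ⟨hc3sat, hc3inc⟩, -, -⟩ := h PX.x6 PX.x1 (by decide) [PX.x0, PX.x6] rootPX6
  have e3 : c3 = [PX.x6, PX.x4, PX.x1] := by
    have := satPX.mp hc3sat
    rw [show sats elemsPX 9 PX.x6 PX.x1 = [[PX.x6, PX.x4, PX.x1]] from by decide] at this
    simpa using this
  subst e3
  have h6441 : lab [PX.x0, PX.x6] PX.x6 PX.x4 < lab [PX.x0, PX.x6, PX.x4] PX.x4 PX.x1 :=
    (List.isChain_cons_cons.mp hc3inc).1
  -- interval [x7, x3], root [x0,x7] : unique chain [x7,x5,x3]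
  obtain ⟨c4, ⟨hc4sat, hc4inc⟩, -, -⟩ := h PX.x7 PX.x3 (by decide) [PX.x0, PX.x7] rootPX7
  have e4 : c4 = [PX.x7, PX.x5, PX.x3] := by
    have := satPX.mp hc4sat
    rw [show sats elemsPX 9 PX.x7 PX.x3 = [[PX.x7, PX.x5, PX.x3]] from by decide] at this
    simpa using this
  subst e4
  have h7553 : lab [PX.x0, PX.x7] PX.x7 PX.x5 < lab [PX.x0, PX.x7, PX.x5] PX.x5 PX.x3 :=
    (List.isChain_cons_cons.mp hc4inc).1
  -- interval [x0, x1], root [x0] : chains [x0,x6,x4,x1] and [x0,x7,x1]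
  have sat641 : SatFromTo [PX.x0, PX.x6, PX.x4, PX.x1] PX.x0 PX.x1 := satPX.mpr (by decide)
  have sat71 : SatFromTo [PX.x0, PX.x7, PX.x1] PX.x0 PX.x1 := satPX.mpr (by decide)
  have inc641 : List.Chain' (· < ·) (labelSeq lab [PX.x0] [PX.x0, PX.x6, PX.x4, PX.x1]) :=
    chain'_triple hA64 h6441
  obtain ⟨c5, ⟨hc5sat, hc5inc⟩, hc5uniq, hc5lex⟩ := h PX.x0 PX.x1 (by decide) [PX.x0] rootPX0
  have e5 : c5 = [PX.x0, PX.x6, PX.x4, PX.x1] := by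
    have h641 := hc5uniq [PX.x0, PX.x6, PX.x4, PX.x1] sat641 inc641
    exact h641.symm
  subst e5
  have hnotinc71 : ¬ lab [PX.x0] PX.x0 PX.x7 < lab [PX.x0, PX.x7] PX.x7 PX.x1 := by
    intro hlt
    have := hc5uniq [PX.x0, PX.x7, PX.x1] sat71 (chain'_pair hlt)
    simp at this
  have hlex1 : List.Lex (· < ·)
      (labelSeq lab [PX.x0] [PX.x0, PX.x6, PX.x4, PX.x1])
      (labelSeq lab [PX.x0] [PX.x0, PX.x7, PX.x1]) :=
    hc5lex [PX.x0, PX.x7, PX.x1] sat71 (by simp)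
  -- interval [x0, x3], root [x0] : chains [x0,x6,x3] and [x0,x7,x5,x3]
  have sat753 : SatFromTo [PX.x0, PX.x7, PX.x5, PX.x3] PX.x0 PX.x3 := satPX.mpr (by decide)
  have sat63 : SatFromTo [PX.x0, PX.x6, PX.x3] PX.x0 PX.x3 := satPX.mpr (by decide)
  have inc753 : List.Chain' (· < ·) (labelSeq lab [PX.x0] [PX.x0, PX.x7, PX.x5, PX.x3]) :=
    chain'_triple hB75 h7553
  obtain ⟨c6, ⟨hc6sat, hc6inc⟩, hc6uniq, hc6lex⟩ := h PX.x0 PX.x3 (by decide) [PX.x0] rootPX0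
  have e6 : c6 = [PX.x0, PX.x7, PX.x5, PX.x3] := by
    have h753 := hc6uniq [PX.x0, PX.x7, PX.x5, PX.x3] sat753 inc753
    exact h753.symm
  subst e6
  have hlex2 : List.Lex (· < ·)
      (labelSeq lab [PX.x0] [PX.x0, PX.x7, PX.x5, PX.x3])
      (labelSeq lab [PX.x0] [PX.x0, PX.x6, PX.x3]) :=
    hc6lex [PX.x0, PX.x6, PX.x3] sat63 (by simp)
  -- derive the contradiction
  have hlex1' : List.Lex (· < ·)
      [lab [PX.x0] PX.x0 PX.x6, lab [PX.x0, PX.x6] PX.x6 PX.x4,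
        lab [PX.x0, PX.x6, PX.x4] PX.x4 PX.x1]
      [lab [PX.x0] PX.x0 PX.x7, lab [PX.x0, PX.x7] PX.x7 PX.x1] := hlex1
  have hlex2' : List.Lex (· < ·)
      [lab [PX.x0] PX.x0 PX.x7, lab [PX.x0, PX.x7] PX.x7 PX.x5,
        lab [PX.x0, PX.x7, PX.x5] PX.x5 PX.x3]
      [lab [PX.x0] PX.x0 PX.x6, lab [PX.x0, PX.x6] PX.x6 PX.x3] := hlex2
  rcases lex_cons_inv hlex1' with hAB | ⟨hAB, hrest1⟩
  · rcases lex_cons_inv hlex2' with hBA | ⟨hBA, -⟩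
    · exact absurd hBA (lt_asymm hAB)
    · rw [hBA] at hAB; exact absurd hAB (lt_irrefl _)
  · rcases lex_cons_inv hrest1 with h6471 | ⟨-, habs⟩
    · exact hnotinc71 (by rw [← hAB]; exact lt_trans hA64 h6471)
    · exact lex_nil habs

end CCnotCL


/-- There exists a finite bounded poset that is not graded, is CC-shellable, and is
not CL-shellable. -/
theorem stmt1 :
    ∃ (P : Type) (_ : PartialOrder P) (_ : BoundedOrder P) (_ : Fintype P),
      ¬ Graded P ∧ CCShellable P ∧ ¬ CLShellable P := by
    exact ⟨CCnotCL.PX, inferInstance, inferInstance, inferInstance,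
    CCnotCL.notGradedPX, ⟨CCnotCL.mylab, CCnotCL.ccPX⟩, CCnotCL.notCLPX⟩
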